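/- Let (A,D) be a dependence graph and let (A_j, D_j), j ∈ J, be a finite family of subgraphs of (A,D). Let π : M(A,D) → ∏_{j∈J} M(A_j,D_j) be the monoid homomorphism whose j-th component is the canonical projection π_{(A_j,D_j)}. Then π is injective if and only if A = ⋃_{j∈J} A_j and D = ⋃_{j∈J} D_j. -/

import Mathlib

/-- The pairs generating the trace congruence: `a·b ~ b·a` for independent letters
(`¬ D a b`). -/
def TraceRel (A : Type*) (D : A → A → Prop) :
    FreeMonoid A → FreeMonoid A → Prop := fun x y =>
  ∃ a b : A, ¬ D a b ∧ x = FreeMonoid.of a * FreeMonoid.of b ∧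
    y = FreeMonoid.of b * FreeMonoid.of a

/-- The trace congruence on the free monoid over `A` w.r.t. the dependence relation
`D`. -/
def traceCon (A : Type*) (D : A → A → Prop) : Con (FreeMonoid A) :=
  conGen (TraceRel A D)

/-- The trace monoid `M(A,D)`: the quotient of the free monoid on `A` by the
congruence generated by `a·b = b·a` for all `a, b` with `¬ D a b`. -/
abbrev TraceMonoid (A : Type*) (D : A → A → Prop) := (traceCon A D).Quotient

section Aux

variable {A : Type*}

/-- The filtering monoid homomorphism on a free monoid. -/
def filterHom (p : A → Bool) : FreeMonoid A →* FreeMonoid A where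
  toFun w := FreeMonoid.ofList ((FreeMonoid.toList w).filter p)
  map_one' := rfl
  map_mul' x y := by
    show FreeMonoid.ofList _ = _
    rw [FreeMonoid.toList_mul, List.filter_append, FreeMonoid.ofList_append]

theorem filterHom_of (p : A → Bool) (a : A) :
    filterHom p (FreeMonoid.of a) = if p a then FreeMonoid.of a else 1 := by
  show FreeMonoid.ofList (List.filter p [a]) = _
  rw [List.filter_singleton]
  by_cases h : p a <;> simp [h, FreeMonoid.ofList_nil, FreeMonoid.ofList_singleton]

theorem toList_filterHom (p : A → Bool) (w : FreeMonoid A) :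
    FreeMonoid.toList (filterHom p w) = (FreeMonoid.toList w).filter p := rfl

/-- Filtering along a "clique" predicate is invariant under the trace congruence. -/
theorem trace_filter_eq {D : A → A → Prop} (p : A → Bool)
    (hp : ∀ x y, p x = true → p y = true → x ≠ y → D x y)
    {u v : FreeMonoid A} (h : traceCon A D u v) :
    filterHom p u = filterHom p v := by
  have hle : traceCon A D ≤ Con.ker (filterHom p) := by
    apply Con.conGen_le.2
    rintro x y ⟨a, b, hnD, rfl, rfl⟩
    rw [Con.ker_rel]
    rcases eq_or_ne a b with rfl | hne
    · rfl
    · simp only [map_mul, filterHom_of]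
      by_cases h1 : p a <;> by_cases h2 : p b <;> simp [h1, h2]
      exact absurd (hp a b h1 h2 hne) hnD
  exact (Con.ker_rel _).mp (hle h)

/-- Moving a letter across a block of independent letters. -/
theorem trace_move {D : A → A → Prop} (c : A) (v2 : List A) :
    ∀ (v1 : List A), (∀ d ∈ v1, ¬ D d c) →
      traceCon A D (FreeMonoid.ofList (v1 ++ c :: v2))
        (FreeMonoid.ofList (c :: (v1 ++ v2)))
  | [], _ => (traceCon A D).refl _
  | d :: v1, h => by
    have ih := trace_move c v2 v1 (fun e he => h e (List.mem_cons_of_mem _ he))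
    have h1 : traceCon A D (FreeMonoid.ofList (d :: (v1 ++ c :: v2)))
        (FreeMonoid.ofList (d :: c :: (v1 ++ v2))) := by
      have := (traceCon A D).mul ((traceCon A D).refl (FreeMonoid.of d)) ih
      simpa [FreeMonoid.ofList_cons] using this
    have h2 : traceCon A D (FreeMonoid.ofList (d :: c :: (v1 ++ v2)))
        (FreeMonoid.ofList (c :: d :: (v1 ++ v2))) := by
      have hgen : traceCon A D (FreeMonoid.of d * FreeMonoid.of c)
          (FreeMonoid.of c * FreeMonoid.of d) :=
        ConGen.Rel.of _ _ ⟨d, c, h d (List.mem_cons_self), rfl, rfl⟩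
      have := (traceCon A D).mul hgen ((traceCon A D).refl (FreeMonoid.ofList (v1 ++ v2)))
      simpa [FreeMonoid.ofList_cons, mul_assoc] using this
    exact (traceCon A D).trans h1 h2

theorem first_split {c : A} : ∀ {v : List A}, c ∈ v →
    ∃ v1 v2, v = v1 ++ c :: v2 ∧ c ∉ v1 := by
  intro v
  induction v with
  | nil => simp
  | cons d v ih =>
    intro h
    by_cases hd : d = c
    · exact ⟨[], v, by simp [hd], by simp⟩
    · have hcv : c ∈ v := by
        rcases List.mem_cons.1 h with h' | h'
        · exact absurd h'.symm hd
        · exact h'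
      obtain ⟨v1, v2, rfl, hn⟩ := ih hcv
      exact ⟨d :: v1, v2, rfl, by
        simp only [List.mem_cons, not_or]
        exact ⟨fun h' => hd h'.symm, hn⟩⟩

open Classical in
/-- The two-element filter predicate. -/
noncomputable def pairP (a b : A) : A → Bool := fun x => decide (x = a ∨ x = b)

theorem pairP_iff {a b x : A} : pairP a b x = true ↔ (x = a ∨ x = b) := by
  simp [pairP]

/-- **The projection lemma**: if two words have equal projections onto every
dependent pair of letters, then they are congruent modulo the trace congruence. -/
theorem proj_lemma {D : A → A → Prop} (hrefl : ∀ a, D a a) (hsymm : ∀ a b, D a b → D b a) :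
    ∀ (n : ℕ) (u v : List A), u.length = n →
      (∀ a b, D a b → u.filter (pairP a b) = v.filter (pairP a b)) →
      traceCon A D (FreeMonoid.ofList u) (FreeMonoid.ofList v) := by
  intro n
  induction n with
  | zero =>
    intro u v hu h
    have hu0 : u = [] := List.length_eq_zero_iff.mp hu
    subst hu0
    have hv0 : v = [] := by
      by_contra hv
      obtain ⟨e, he⟩ := List.exists_mem_of_ne_nil v hv
      have := h e e (hrefl e)
      have hmem : e ∈ v.filter (pairP e e) :=
        List.mem_filter.2 ⟨he, pairP_iff.2 (Or.inl rfl)⟩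
      rw [← this] at hmem
      simp at hmem
    subst hv0
    exact (traceCon A D).refl _
  | succ n ih =>
    intro u v hu h
    obtain ⟨c, u', rfl⟩ : ∃ c u', u = c :: u' := by
      cases u with
      | nil => simp at hu
      | cons c u' => exact ⟨c, u', rfl⟩
    have hpcc : pairP c c c = true := pairP_iff.2 (Or.inl rfl)
    -- c occurs in v
    have hcv : c ∈ v := by
      have hc := h c c (hrefl c)
      rw [List.filter_cons_of_pos hpcc] at hc
      have : c ∈ v.filter (pairP c c) := by rw [← hc]; exact List.mem_cons_self
      exact List.mem_of_mem_filter this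
    obtain ⟨v1, v2, rfl, hc1⟩ := first_split hcv
    -- letters before the first c are independent of c
    have hind : ∀ d ∈ v1, ¬ D d c := by
      intro d hd hDdc
      have hdc : d ≠ c := fun h' => hc1 (h' ▸ hd)
      have heq := h c d (hsymm d c hDdc)
      have hdmem : d ∈ v1.filter (pairP c d) :=
        List.mem_filter.2 ⟨hd, pairP_iff.2 (Or.inr rfl)⟩
      obtain ⟨h0, t, hft⟩ := List.exists_cons_of_ne_nil (List.ne_nil_of_mem hdmem)
      rw [List.filter_cons_of_pos (pairP_iff.2 (Or.inl rfl)), List.filter_append, hft,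
        List.filter_cons_of_pos (pairP_iff.2 (Or.inl rfl))] at heq
      have hch : c = h0 := by
        have := congrArg List.head? heq
        simpa using this
      have : h0 ∈ v1 := List.mem_of_mem_filter (hft ▸ (List.mem_cons_self (a := h0) (l := t)))
      exact hc1 (hch ▸ this)
    -- projections of the tails agree
    have h' : ∀ a b, D a b → u'.filter (pairP a b) = (v1 ++ v2).filter (pairP a b) := by
      intro a b hab
      have heq := h a b hab
      by_cases hc2 : pairP a b c = true
      · have hv1 : v1.filter (pairP a b) = [] := by
          rw [List.filter_eq_nil_iff]
          intro d hd hpd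
          have hdc : d ≠ c := fun h' => hc1 (h' ▸ hd)
          have hDdc : D d c := by
            rcases pairP_iff.1 hpd with rfl | rfl <;> rcases pairP_iff.1 hc2 with h3 | h3
            · exact absurd h3.symm hdc
            · exact h3 ▸ hab
            · exact h3 ▸ hsymm _ _ hab
            · exact absurd h3.symm hdc
          exact hind d hd hDdc
        rw [List.filter_cons_of_pos hc2, List.filter_append, hv1,
          List.filter_cons_of_pos hc2, List.nil_append] at heq
        rw [List.filter_append, hv1, List.nil_append]
        exact List.cons_injective heq
      · rw [List.filter_cons_of_neg (by simpa using hc2), List.filter_append,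
          List.filter_cons_of_neg (by simpa using hc2)] at heq
        rw [List.filter_append]
        exact heq
    have hlen : u'.length = n := by simpa using hu
    have ihh := ih u' (v1 ++ v2) hlen h'
    have h1 : traceCon A D (FreeMonoid.ofList (c :: u'))
        (FreeMonoid.ofList (c :: (v1 ++ v2))) := by
      have := (traceCon A D).mul ((traceCon A D).refl (FreeMonoid.of c)) ihh
      simpa [FreeMonoid.ofList_cons] using this
    exact (traceCon A D).trans h1 ((traceCon A D).symm (trace_move c v2 v1 hind))

end Aux

/-- Let `(A,D)` be a dependence graph (reflexive symmetric `D`) and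
`(A' j, D' j)`, `j ∈ J`, a finite family of subgraphs. Let `π j : M(A,D) → M(A' j, D' j)`
be the canonical projections (sending a letter of `A' j` to its trace and all other
letters to `1`). Then the induced homomorphism `π` into the direct product is injective
iff `A = ⋃ⱼ A' j` and `D = ⋃ⱼ D' j`. -/
theorem stmt11 {A : Type*} (D : A → A → Prop)
    (hD_refl : ∀ a, D a a) (hD_symm : ∀ a b, D a b → D b a)
    {J : Type*} [Finite J]
    (A' : J → Set A) (D' : J → A → A → Prop)
    (hsub : ∀ j a b, D' j a b → D a b)
    (hsupp : ∀ j a b, D' j a b → a ∈ A' j ∧ b ∈ A' j)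
    (hrefl' : ∀ j, ∀ a ∈ A' j, D' j a a)
    (hsymm' : ∀ j a b, D' j a b → D' j b a)
    (π : ∀ j, TraceMonoid A D →* TraceMonoid (A' j) (fun x y => D' j x y))
    (hπ_mem : ∀ j (a : A) (h : a ∈ A' j),
      π j ((FreeMonoid.of a : FreeMonoid A) : TraceMonoid A D) =
        ((FreeMonoid.of (⟨a, h⟩ : A' j) : FreeMonoid (A' j)) :
          TraceMonoid (A' j) (fun x y => D' j x y)))
    (hπ_not : ∀ j (a : A), a ∉ A' j →
      π j ((FreeMonoid.of a : FreeMonoid A) : TraceMonoid A D) = 1) :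
    Function.Injective (fun (t : TraceMonoid A D) (j : J) => π j t) ↔
      ((∀ a : A, ∃ j, a ∈ A' j) ∧ ∀ a b : A, D a b ↔ ∃ j, D' j a b) := by
  classical
  constructor
  · intro hinj
    have hletter : ∀ a : A, ∃ j, a ∈ A' j := by
      intro a
      by_contra hno
      push_neg at hno
      have hfn : (fun j => π j ((FreeMonoid.of a : FreeMonoid A) : TraceMonoid A D)) =
          (fun j => π j (1 : TraceMonoid A D)) := by
        funext j; rw [hπ_not j a (hno j), map_one]
      have heq : ((FreeMonoid.of a : FreeMonoid A) : TraceMonoid A D) = 1 := hinj hfn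
      have htc : traceCon A D (FreeMonoid.of a) 1 := by
        rw [← Con.eq]; exact heq
      have := trace_filter_eq (D := D) (fun x => decide (x = a))
        (fun x y hx hy hne => by
          simp only [decide_eq_true_eq] at hx hy
          exact absurd (hx.trans hy.symm) hne) htc
      rw [filterHom_of, map_one, if_pos (by simp)] at this
      exact FreeMonoid.of_ne_one a this
    refine ⟨hletter, fun a b => ⟨?_, fun ⟨j, hj⟩ => hsub j a b hj⟩⟩
    intro hab
    by_contra hno
    push_neg at hno
    rcases eq_or_ne a b with rfl | hne
    · obtain ⟨j, hj⟩ := hletter a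
      exact hno j (hrefl' j a hj)
    · have hcomm : (fun j => π j (↑(FreeMonoid.of a * FreeMonoid.of b) : TraceMonoid A D)) =
          (fun j => π j (↑(FreeMonoid.of b * FreeMonoid.of a) : TraceMonoid A D)) := by
        funext j
        rw [Con.coe_mul, Con.coe_mul, map_mul, map_mul]
        by_cases hja : a ∈ A' j <;> by_cases hjb : b ∈ A' j
        · rw [hπ_mem j a hja, hπ_mem j b hjb, ← Con.coe_mul, ← Con.coe_mul, Con.eq]
          exact ConGen.Rel.of _ _ ⟨⟨a, hja⟩, ⟨b, hjb⟩, hno j, rfl, rfl⟩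
        · rw [hπ_mem j a hja, hπ_not j b hjb, mul_one, one_mul]
        · rw [hπ_not j a hja, hπ_mem j b hjb, mul_one, one_mul]
        · rw [hπ_not j a hja, hπ_not j b hjb]
      have heq := hinj hcomm
      rw [Con.eq] at heq
      have hclique : ∀ x y, pairP a b x = true → pairP a b y = true → x ≠ y → D x y := by
        intro x y hx hy hxy
        rcases pairP_iff.1 hx with hx' | hx' <;> rcases pairP_iff.1 hy with hy' | hy'
        · exact absurd (hx'.trans hy'.symm) hxy
        · rw [hx', hy']; exact hab
        · rw [hx', hy']; exact hD_symm a b hab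
        · exact absurd (hx'.trans hy'.symm) hxy
      have hfe := trace_filter_eq (pairP a b) hclique heq
      rw [map_mul, map_mul, filterHom_of, filterHom_of,
        if_pos (pairP_iff.2 (Or.inl rfl)), if_pos (pairP_iff.2 (Or.inr rfl))] at hfe
      have : ([a, b] : List A) = [b, a] := congrArg FreeMonoid.toList hfe
      simp at this
      exact hne this.1
  · rintro ⟨hcovA, hcovD⟩
    intro x y hxy
    induction x using Con.induction_on with | H u =>
    induction y using Con.induction_on with | H v =>
    have hπj : ∀ j, π j ↑u = π j ↑v := fun j => congrFun hxy j
    rw [Con.eq]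
    have key : ∀ a b, D a b →
        (FreeMonoid.toList u).filter (pairP a b) = (FreeMonoid.toList v).filter (pairP a b) := by
      intro a b hab
      obtain ⟨j, hj'⟩ := (hcovD a b).1 hab
      obtain ⟨ha, hb⟩ := hsupp j a b hj'
      set φ : FreeMonoid (A' j) →* FreeMonoid A :=
        (filterHom (pairP a b)).comp (FreeMonoid.map Subtype.val) with hφ
      have hφ_of : ∀ c : A' j,
          φ (FreeMonoid.of c) = if pairP a b (c : A) then FreeMonoid.of (c : A) else 1 := by
        intro c
        rw [hφ, MonoidHom.comp_apply, FreeMonoid.map_of, filterHom_of]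
      have hker : traceCon (A' j) (fun x y => D' j x y) ≤ Con.ker φ := by
        apply Con.conGen_le.2
        rintro x y ⟨c, d, hnD, rfl, rfl⟩
        rw [Con.ker_rel]
        rcases eq_or_ne c d with rfl | hcd
        · rfl
        · have hval : (c : A) ≠ (d : A) → ¬(pairP a b (c : A) = true ∧ pairP a b (d : A) = true) := by
            intro hne' ⟨h1, h2⟩
            have hD'cd : D' j (c : A) (d : A) := by
              rcases pairP_iff.1 h1 with hc | hc <;> rcases pairP_iff.1 h2 with hd | hd
              · exact absurd (hc.trans hd.symm) hne'
              · rw [hc, hd]; exact hj'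
              · rw [hc, hd]; exact hsymm' j a b hj'
              · exact absurd (hc.trans hd.symm) hne'
            exact hnD hD'cd
          rcases eq_or_ne (c : A) (d : A) with hcd' | hne'
          · have : c = d := Subtype.ext hcd'
            exact absurd this hcd
          · have := hval hne'
            rw [map_mul, map_mul, hφ_of, hφ_of]
            by_cases h1 : pairP a b (c : A) <;> by_cases h2 : pairP a b (d : A) <;>
              simp [h1, h2]
            exact absurd ⟨h1, h2⟩ this
      set ψ := (traceCon (A' j) (fun x y => D' j x y)).lift φ hker with hψ
      have hcompose : ∀ w : FreeMonoid A, ψ (π j ↑w) = filterHom (pairP a b) w := by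
        have hh : (ψ.comp ((π j).comp (traceCon A D).mk')) = filterHom (pairP a b) := by
          apply FreeMonoid.hom_eq
          intro e
          show ψ (π j ((FreeMonoid.of e : FreeMonoid A) : TraceMonoid A D)) = _
          by_cases he : e ∈ A' j
          · rw [hπ_mem j e he, filterHom_of]
            rw [hψ]
            rw [Con.lift_coe, hφ_of]
          · rw [hπ_not j e he, map_one, filterHom_of]
            have hnp : pairP a b e ≠ true := by
              intro hp
              rcases pairP_iff.1 hp with rfl | rfl
              · exact he ha
              · exact he hb
            rw [if_neg hnp]
        intro w
        exact DFunLike.congr_fun hh w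
      have : filterHom (pairP a b) u = filterHom (pairP a b) v := by
        rw [← hcompose u, ← hcompose v, hπj j]
      exact congrArg FreeMonoid.toList this
    have := proj_lemma hD_refl hD_symm (FreeMonoid.toList u).length
      (FreeMonoid.toList u) (FreeMonoid.toList v) rfl key
    simpa [FreeMonoid.ofList_toList] using this
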